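/- For any finite sequence a of real numbers, the panorama sequence pan(a) is a restricted growth function. -/

import Mathlib

def ascents (l : List ℕ) : ℕ :=
  ((l.zip l.tail).filter (fun p => p.1 < p.2)).length

def IsAscSeq (l : List ℕ) : Prop :=
  l.getD 0 0 = 0 ∧
  ∀ k, k < l.length → 0 < k → l.getD k 0 ≤ ascents (l.take k) + 1

def IsRGF (l : List ℕ) : Prop :=
  l.getD 0 0 = 0 ∧
  ∀ k, k < l.length → ∀ j, l.getD k 0 = j + 1 → ∃ i, i < k ∧ l.getD i 0 = j

def SelfModified (l : List ℕ) : Prop :=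
  IsAscSeq l ∧
  ∀ k, k < l.length → 0 < k →
    l.getD k 0 ≤ l.getD (k - 1) 0 ∨ l.getD k 0 = ascents (l.take k) + 1

def Contains101 (l : List ℕ) : Prop :=
  ∃ i j k, i < j ∧ j < k ∧ k < l.length ∧
    l.getD i 0 = l.getD k 0 ∧ l.getD j 0 < l.getD k 0

def Contains0101 (l : List ℕ) : Prop :=
  ∃ i j k m, i < j ∧ j < k ∧ k < m ∧ m < l.length ∧
    l.getD i 0 = l.getD k 0 ∧ l.getD j 0 = l.getD m 0 ∧ l.getD i 0 < l.getD j 0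

def Contains1010 (l : List ℕ) : Prop :=
  ∃ i j k m, i < j ∧ j < k ∧ k < m ∧ m < l.length ∧
    l.getD i 0 = l.getD k 0 ∧ l.getD j 0 = l.getD m 0 ∧ l.getD j 0 < l.getD i 0

/-- The view of position `i` in the sequence `a`: the number of indices `j > i` such
that `a j` strictly exceeds all entries `a k` for `i ≤ k < j`.  This agrees with the
recursive definition `v i = v j + 1` for `j` the least index `> i` with `a j > a i`. -/
def view {α : Type*} [LinearOrder α] [Inhabited α] (a : List α) (i : ℕ) : ℕ :=
  ((List.range a.length).filter (fun j =>
    decide (i < j ∧ ∀ k, k < j → i ≤ k → a.getD k default < a.getD j default))).length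

/-- The panorama of `a`: the views of the positions of `a`, listed grouped by entry
value from largest value to smallest, positions within a group in increasing order. -/
def pan {α : Type*} [LinearOrder α] [Inhabited α] (a : List α) : List ℕ :=
  ((List.range a.length).mergeSort (fun i j =>
    decide (a.getD j default < a.getD i default ∨
      (a.getD i default = a.getD j default ∧ i ≤ j)))).map (view a)

/-- A square matrix of natural numbers, given by a dimension and an entry function
(indices are 0-based; entries with an index `≥ d` are irrelevant/zero). -/
structure FMat where
  d : ℕ
  entry : ℕ → ℕ → ℕ

/-- 0-based index of the first row whose rightmost entry is nonzero. -/
noncomputable def mindex (M : FMat) : ℕ :=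
  sInf {i | M.entry i (M.d - 1) ≠ 0}

/-- One step of the recursive bijection from ascent sequences to Fishburn matrices,
with cases AM1, AM2, AM3 (0-based indices). -/
noncomputable def fStep (M : FMat) (a : ℕ) : FMat :=
  if a ≤ mindex M then
    -- AM1: increase entry (a, d-1)
    ⟨M.d, fun i j => M.entry i j + if i = a ∧ j = M.d - 1 then 1 else 0⟩
  else if a = M.d then
    -- AM2: append a new row and column, with 1 in the new diagonal entry
    ⟨M.d + 1, fun i j =>
      if i = M.d ∨ j = M.d then (if i = M.d ∧ j = M.d then 1 else 0)
      else M.entry i j⟩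
  else
    -- AM3: insert a new row and column at index a
    ⟨M.d + 1, fun i j =>
      if i = a then (if j = M.d then 1 else 0)
      else if j = a then (if i < a then M.entry i (M.d - 1) else 0)
      else if j = M.d ∧ i < a then 0
      else M.entry (if i < a then i else i - 1) (if j < a then j else j - 1)⟩

/-- The map from ascent sequences to Fishburn matrices. -/
noncomputable def fAM (l : List ℕ) : FMat :=
  l.tail.foldl fStep ⟨1, fun i j => if i = 0 ∧ j = 0 then 1 else 0⟩

/-- Fishburn matrix: upper triangular (and supported on `[0,d) × [0,d)`),
with no zero row and no zero column. -/
def IsFishburn (M : FMat) : Prop :=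
  (∀ i j, (M.d ≤ i ∨ M.d ≤ j ∨ j < i) → M.entry i j = 0) ∧
  (∀ i, i < M.d → ∃ j, j < M.d ∧ M.entry i j ≠ 0) ∧
  (∀ j, j < M.d → ∃ i, i < M.d ∧ M.entry i j ≠ 0)

def entrySum (M : FMat) : ℕ :=
  ∑ i ∈ Finset.range M.d, ∑ j ∈ Finset.range M.d, M.entry i j

/-- Reflection of a matrix through its antidiagonal. -/
def reflect (M : FMat) : FMat :=
  ⟨M.d, fun i j => if i < M.d ∧ j < M.d then M.entry (M.d - 1 - j) (M.d - 1 - i) else 0⟩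

/-- The canonical sequence `(0^{m₀₀}, 1^{m₁₁}, 0^{m₀₁}, 2^{m₂₂}, 1^{m₁₂}, 0^{m₀₂}, …)`
(0-based indices) associated to a matrix; this is `f_MA(M)` for `M ∈ RMatrices`. -/
def canonSeq (M : FMat) : List ℕ :=
  (List.range M.d).flatMap (fun j =>
    (List.range (j + 1)).reverse.flatMap (fun i => List.replicate (M.entry i j) i))

/-- The dual canonical sequence
`(0^{m_{d-1,d-1}}, 1^{m_{d-2,d-2}}, 0^{m_{d-2,d-1}}, …, (d-1)^{m_{0,0}}, …, 0^{m_{0,d-1}})`,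
i.e. `f_MA` applied to the antidiagonal reflection of `M`. -/
def dualCanonSeq (M : FMat) : List ℕ :=
  (List.range M.d).flatMap (fun j =>
    (List.range (j + 1)).reverse.flatMap (fun i =>
      List.replicate (M.entry (M.d - 1 - j) (M.d - 1 - i)) i))

/-- A matrix is SE-free if it has no pair of nonzero entries `m i j`, `m i' j'`
with `i < i'`, `j < j'` and `i' ≤ j`. -/
def SEFree (M : FMat) : Prop :=
  ¬ ∃ i j i' j', i < i' ∧ j < j' ∧ i' ≤ j ∧ j' < M.d ∧
    M.entry i j ≠ 0 ∧ M.entry i' j' ≠ 0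

/-- Generalized ballot sequence (Yamanouchi word): in every prefix, each value `j+1`
occurs at most as often as `j`. -/
def IsBallot (l : List ℕ) : Prop :=
  ∀ k j, (l.take k).count (j + 1) ≤ (l.take k).count j

namespace PanAux

lemma decide_or' (p q : Prop) [Decidable p] [Decidable q] :
    (decide p || decide q) = decide (p ∨ q) := by
  by_cases hp : p <;> by_cases hq : q <;> simp [hp, hq]

lemma filter_length_aux (x : ℕ) (q : ℕ → Bool) (hq : q x = false) :
    ∀ (l : List ℕ), l.Nodup → x ∈ l →
      (l.filter (fun j => decide (j = x) || q j)).length = (l.filter q).length + 1 := by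
  intro l
  induction l with
  | nil => intro _ h; simp at h
  | cons h t ih =>
    intro hnd hm
    rcases eq_or_ne h x with rfl | hne
    · have hxt : h ∉ t := (List.nodup_cons.mp hnd).1
      have he : t.filter (fun j => decide (j = h) || q j) = t.filter q := by
        apply List.filter_congr
        intro j hj
        have : j ≠ h := fun e => hxt (e ▸ hj)
        simp [this]
      simp [List.filter_cons, hq, he]
    · have hxt : x ∈ t := (List.mem_cons.mp hm).resolve_left (Ne.symm hne)
      have e : (decide (h = x) || q h) = q h := by simp [hne]
      rw [List.filter_cons, List.filter_cons, e]
      cases q h <;> simp [ih (List.nodup_cons.mp hnd).2 hxt]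

lemma view_step (a : List ℝ) (i : ℕ) (h : 0 < view a i) :
    ∃ i', i < i' ∧ i' < a.length ∧ a.getD i default < a.getD i' default ∧
      view a i = view a i' + 1 := by
  classical
  set n := a.length with hn
  have hne : ∃ j, j < n ∧ (i < j ∧ ∀ k, k < j → i ≤ k → a.getD k default < a.getD j default) := by
    have : ((List.range n).filter (fun j =>
        decide (i < j ∧ ∀ k, k < j → i ≤ k → a.getD k default < a.getD j default))) ≠ [] := by
      intro e
      rw [view, ← hn, e] at h; simp at h
    obtain ⟨j, hj⟩ := List.exists_mem_of_ne_nil _ this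
    obtain ⟨hj1, hj2⟩ := List.mem_filter.mp hj
    exact ⟨j, List.mem_range.mp hj1, of_decide_eq_true hj2⟩
  set i' := Nat.find hne with hi'
  obtain ⟨hi'n, hii', hmin⟩ := Nat.find_spec hne
  have hmin' : ∀ m, m < i' → ¬ (i < m ∧ ∀ k, k < m → i ≤ k → a.getD k default < a.getD m default) := by
    intro m hm hP
    have := Nat.find_min hne hm
    exact this ⟨lt_trans hm hi'n, hP⟩
  have hai : a.getD i default < a.getD i' default := hmin i (by omega) (le_refl i)
  have key : ∀ j, j ∈ List.range n →
      ((i < j ∧ ∀ k, k < j → i ≤ k → a.getD k default < a.getD j default) ↔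
       (j = i' ∨ (i' < j ∧ ∀ k, k < j → i' ≤ k → a.getD k default < a.getD j default))) := by
    intro j _
    constructor
    · rintro ⟨h1, h2⟩
      rcases lt_trichotomy j i' with hlt | heq | hgt
      · exact absurd ⟨h1, h2⟩ (hmin' j hlt)
      · exact Or.inl heq
      · exact Or.inr ⟨hgt, fun k hk hk' => h2 k hk (by omega)⟩
    · rintro (rfl | ⟨h1, h2⟩)
      · exact ⟨hii', hmin⟩
      · refine ⟨by omega, fun k hk hk' => ?_⟩
        rcases lt_or_ge k i' with hki | hki
        · exact lt_trans (hmin k hki hk') (h2 i' h1 (le_refl _))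
        · exact h2 k hk hki
  have hfe : ((List.range n).filter (fun j =>
      decide (i < j ∧ ∀ k, k < j → i ≤ k → a.getD k default < a.getD j default))) =
      ((List.range n).filter (fun j => decide (j = i') ||
        decide (i' < j ∧ ∀ k, k < j → i' ≤ k → a.getD k default < a.getD j default))) := by
    apply List.filter_congr
    intro j hj
    rw [decide_or', decide_eq_decide]
    exact key j hj
  have hcount := filter_length_aux i'
    (fun j => decide (i' < j ∧ ∀ k, k < j → i' ≤ k → a.getD k default < a.getD j default))
    (by simp) (List.range n) List.nodup_range (List.mem_range.mpr hi'n)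
  refine ⟨i', hii', hi'n, hai, ?_⟩
  rw [view, view, ← hn, hfe]
  exact hcount

end PanAux

theorem pan_isRGF (a : List ℝ) : IsRGF (pan a) := by
  classical
  set le : ℕ → ℕ → Bool := fun i j => decide (a.getD j default < a.getD i default ∨
      (a.getD i default = a.getD j default ∧ i ≤ j)) with hle
  set L := (List.range a.length).mergeSort le with hL
  have hperm : L.Perm (List.range a.length) := List.mergeSort_perm _ _
  have hlen : L.length = a.length := by rw [hperm.length_eq, List.length_range]
  have htrans : ∀ x y z, le x y = true → le y z = true → le x z = true := by
    intro x y z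
    simp only [hle, decide_eq_true_eq]
    rintro (h1 | ⟨h1, h1'⟩) (h2 | ⟨h2, h2'⟩)
    · exact Or.inl (lt_trans h2 h1)
    · exact Or.inl (h2 ▸ h1)
    · exact Or.inl (h1 ▸ h2)
    · exact Or.inr ⟨h1.trans h2, h1'.trans h2'⟩
  have htotal : ∀ x y, (le x y || le y x) = true := by
    intro x y
    simp only [hle, Bool.or_eq_true, decide_eq_true_eq]
    rcases lt_trichotomy (a.getD x default) (a.getD y default) with h | h | h
    · exact Or.inr (Or.inl h)
    · rcases Nat.le_total x y with h' | h'
      · exact Or.inl (Or.inr ⟨h, h'⟩)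
      · exact Or.inr (Or.inr ⟨h.symm, h'⟩)
    · exact Or.inl (Or.inl h)
  have hsorted := List.pairwise_mergeSort htrans htotal (List.range a.length)
  rw [← hL] at hsorted
  have hpair : ∀ k m (hk : k < L.length) (hm : m < L.length), k < m → le L[k] L[m] = true :=
    fun k m hk hm h => List.pairwise_iff_getElem.mp hsorted k m hk hm h
  have hLlt : ∀ k (hk : k < L.length), L[k] < a.length := fun k hk =>
    List.mem_range.mp (hperm.mem_iff.mp (L.getElem_mem hk))
  have hpan : pan a = L.map (view a) := rfl
  have hpanlen : (pan a).length = L.length := by rw [hpan, List.length_map]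
  constructor
  · rcases Nat.eq_zero_or_pos (pan a).length with h0 | h0
    · rw [List.getD_eq_default]
      omega
    · have hk0 : 0 < L.length := by rwa [hpanlen] at h0
      rw [hpan, List.getD_eq_getElem _ _ (by rwa [List.length_map, ← hpanlen, hpan]), List.getElem_map]
      have hmax : ∀ j, j < a.length → a.getD j default ≤ a.getD L[0] default := by
        intro j hj
        have hjL : j ∈ L := hperm.mem_iff.mpr (List.mem_range.mpr hj)
        obtain ⟨m, hm, rfl⟩ := List.getElem_of_mem hjL
        rcases Nat.eq_zero_or_pos m with rfl | hmpos
        · exact le_refl _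
        · have := hpair 0 m hk0 hm hmpos
          rw [hle, decide_eq_true_eq] at this
          rcases this with h | ⟨h, _⟩
          · exact le_of_lt h
          · exact le_of_eq h.symm
      have : ((List.range a.length).filter (fun j =>
          decide (L[0] < j ∧ ∀ k, k < j → L[0] ≤ k → a.getD k default < a.getD j default))) = [] := by
        rw [List.filter_eq_nil_iff]
        intro j hj
        rw [decide_eq_true_eq]
        rintro ⟨h1, h2⟩
        exact absurd (h2 L[0] h1 (le_refl _)) (not_lt.mpr (hmax j (List.mem_range.mp hj)))
      rw [view, this]
      rfl
  · intro k hk j hj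
    have hkL : k < L.length := by rwa [hpanlen] at hk
    rw [hpan, List.getD_eq_getElem _ _ (by rwa [List.length_map]), List.getElem_map] at hj
    have hpos : 0 < view a L[k] := by omega
    obtain ⟨i', hlt, hi'n, haval, hstep⟩ := PanAux.view_step a L[k] hpos
    have hvj : view a i' = j := by omega
    have hi'L : i' ∈ L := hperm.mem_iff.mpr (List.mem_range.mpr hi'n)
    obtain ⟨k', hk', hLk'⟩ := List.getElem_of_mem hi'L
    have hne : k' ≠ k := by
      intro e
      subst e
      omega
    have hlt' : k' < k := by
      rcases lt_or_gt_of_ne hne with h | h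
      · exact h
      · exfalso
        have := hpair k k' hkL hk' h
        rw [hle, decide_eq_true_eq, hLk'] at this
        rcases this with h' | ⟨h', _⟩
        · exact absurd haval (not_lt.mpr (le_of_lt h'))
        · exact absurd haval (not_lt.mpr (le_of_eq h'.symm))
    refine ⟨k', hlt', ?_⟩
    rw [hpan, List.getD_eq_getElem _ _ (by rw [List.length_map]; omega), List.getElem_map, hLk', hvj]
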